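/- If A is a ring such that the factor ring A/J(A) is commutative (where J(A) is the Jacobson radical), then every maximal right ideal of A is a two-sided ideal. -/
import Mathlib


/-- A ring is *centrally essential* if its center is an essential submodule over the
center, i.e. every nonzero element has a nonzero central multiple by a central element. -/
def IsCentrallyEssential (A : Type*) [Ring A] : Prop :=
  ∀ a : A, a ≠ 0 → ∃ z ∈ Set.center A, a * z ≠ 0 ∧ a * z ∈ Set.center A

/-- A right ideal (submodule of `A` as a right module over itself) is a two-sided ideal
if it is closed under left multiplication. -/
def IsTwoSidedRightIdeal {A : Type*} [Ring A] (I : Submodule Aᵐᵒᵖ A) : Prop :=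
  ∀ a x : A, x ∈ I → a * x ∈ I

/-- A ring is right quasi-invariant if every maximal right ideal is two-sided. -/
def IsRightQuasiInvariant (A : Type*) [Ring A] : Prop :=
  ∀ M : Submodule Aᵐᵒᵖ A, IsCoatom M → IsTwoSidedRightIdeal M

/-- For `x` in the Jacobson radical, `1 - x*a` has a left inverse of the same shape. -/
lemma jac_left_inv {A : Type*} [Ring A] {x : A} (hx : x ∈ (⊥ : Ideal A).jacobson) (a : A) :
    ∃ b : A, (1 - x * b) * (1 - x * a) = 1 := by
  obtain ⟨z, hz⟩ := Ideal.mem_jacobson_iff.1 hx (-a)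
  rw [Ideal.mem_bot, sub_eq_zero] at hz
  refine ⟨-(z * a), ?_⟩
  have h1 : z * (1 - a * x) = 1 := by rw [mul_sub, mul_one, ← hz]; noncomm_ring
  have h2 : (1 - x * -(z * a)) * (1 - x * a) = 1 - x * a + x * (z * (1 - a * x)) * a := by
    noncomm_ring
  rw [h2, h1]; noncomm_ring

/-- For `x` in the Jacobson radical, `1 - x*a` has a right inverse. -/
lemma jac_right_inv {A : Type*} [Ring A] {x : A} (hx : x ∈ (⊥ : Ideal A).jacobson) (a : A) :
    ∃ r : A, (1 - x * a) * r = 1 := by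
  obtain ⟨b, hb⟩ := jac_left_inv hx a
  obtain ⟨c, hc⟩ := jac_left_inv hx b
  refine ⟨1 - x * b, ?_⟩
  have hm : (1 - x * a) = 1 - x * c := by
    calc (1 - x * a) = ((1 - x * c) * (1 - x * b)) * (1 - x * a) := by rw [hc, one_mul]
    _ = (1 - x * c) * ((1 - x * b) * (1 - x * a)) := by rw [mul_assoc]
    _ = 1 - x * c := by rw [hb, mul_one]
  rw [hm, hc]

/-- The Jacobson radical is contained in every maximal right ideal. -/
lemma jac_le_maximal_right {A : Type*} [Ring A] {M : Submodule Aᵐᵒᵖ A} (hM : IsCoatom M)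
    {j : A} (hj : j ∈ (⊥ : Ideal A).jacobson) : j ∈ M := by
  by_contra h
  have hsup : M ⊔ Submodule.span Aᵐᵒᵖ {j} = ⊤ := by
    refine hM.2 _ (lt_of_le_of_ne le_sup_left fun he => h ?_)
    exact he ▸ Submodule.mem_sup_right (Submodule.mem_span_singleton_self j)
  have h1 : (1 : A) ∈ M ⊔ Submodule.span Aᵐᵒᵖ {j} := hsup ▸ Submodule.mem_top
  obtain ⟨m, hm, s, hs, hms⟩ := Submodule.mem_sup.1 h1
  obtain ⟨c, hc⟩ := Submodule.mem_span_singleton.1 hs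
  have hmval : m = 1 - j * c.unop := by
    rw [← hms, ← hc, MulOpposite.smul_eq_mul_unop, add_sub_cancel_right]
  obtain ⟨r, hr⟩ := jac_right_inv hj c.unop
  have h1M : (1 : A) ∈ M := by
    have := M.smul_mem (MulOpposite.op r) hm
    rwa [MulOpposite.smul_eq_mul_unop, MulOpposite.unop_op, hmval, hr] at this
  exact hM.1 (by
    rw [eq_top_iff]
    intro y _
    have := M.smul_mem (MulOpposite.op y) h1M
    rwa [MulOpposite.smul_eq_mul_unop, MulOpposite.unop_op, one_mul] at this)

/-- If `A/J(A)` is commutative, then every maximal right ideal of `A` is a two-sided ideal. -/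
theorem stmt_0 (A : Type*) [Ring A]
    (hcomm : ∀ a b : A, a * b - b * a ∈ (⊥ : Ideal A).jacobson) :
    IsRightQuasiInvariant A := by
  intro M hM a x hxM
  have hxa : x * a ∈ M := by
    have := M.smul_mem (MulOpposite.op a) hxM
    rwa [MulOpposite.smul_eq_mul_unop, MulOpposite.unop_op] at this
  have hjM : a * x - x * a ∈ M := jac_le_maximal_right hM (hcomm a x)
  have : (a * x - x * a) + x * a ∈ M := M.add_mem hjM hxa
  rwa [sub_add_cancel] at this
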